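/- Let a ∈ ℝ^{2n}, u ∈ ℝ^{2n}. Then for any real number ε > 0, the infimum of (uᵀ ⊗ aᵀ) vec(E) over all matrices E ∈ ℝ^{2×2n} with Frobenius norm ‖E‖_F ≤ √2·ε and of the form E = T(e) for some complex row vector e with ‖e‖₂ ≤ ε, where T(e) = [[Re(e), -Im(e)],[Im(e), Re(e)]], equals -ε·‖u‖·‖a‖. -/

import Mathlib

open Matrix
/-- The real representation `T(e) = [[Re e, -Im e], [Im e, Re e]] ∈ ℝ^{2×2N}` of a
complex row vector `e ∈ ℂ^{1×N}`; columns are indexed by `Fin 2 × Fin N`, where the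
first block of columns carries `(Re eₖ, Im eₖ)` and the second `(-Im eₖ, Re eₖ)`. -/
noncomputable def Treal (N : ℕ) (e : Fin N → ℂ) : Matrix (Fin 2) (Fin 2 × Fin N) ℝ :=
  Matrix.of fun i bk =>
    if i = 0 then (if bk.1 = 0 then (e bk.2).re else -(e bk.2).im)
    else (if bk.1 = 0 then (e bk.2).im else (e bk.2).re)


noncomputable def vvec (N : ℕ) (a : EuclideanSpace ℝ (Fin 2))
    (u : EuclideanSpace ℝ (Fin 2 × Fin N)) : EuclideanSpace ℂ (Fin N) :=
  WithLp.toLp 2 fun k => (⟨a 0 * u (0, k) + a 1 * u (1, k), a 1 * u (0, k) - a 0 * u (1, k)⟩ : ℂ)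

lemma expr_eq (N : ℕ) (a : EuclideanSpace ℝ (Fin 2)) (u : EuclideanSpace ℝ (Fin 2 × Fin N))
    (e : EuclideanSpace ℂ (Fin N)) :
    (fun i => a i) ⬝ᵥ (Treal N e).mulVec (fun j => u j) =
      ∑ k, ((e k).re * (vvec N a u k).re + (e k).im * (vvec N a u k).im) := by
  simp only [dotProduct, Matrix.mulVec, Treal, Matrix.of_apply, Fin.sum_univ_two,
    Fintype.sum_prod_type, vvec, PiLp.toLp_apply, if_true, Fin.isValue, one_ne_zero, if_false,
    reduceIte, Finset.mul_sum, ← Finset.sum_add_distrib]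
  exact Finset.sum_congr rfl fun k _ => by ring

lemma inner_re_eq (N : ℕ) (e v : EuclideanSpace ℂ (Fin N)) :
    (inner ℂ e v : ℂ).re = ∑ k, ((e k).re * (v k).re + (e k).im * (v k).im) := by
  rw [PiLp.inner_apply, Complex.re_sum]
  exact Finset.sum_congr rfl fun k _ => by
    simp only [RCLike.inner_apply, Complex.mul_re, Complex.conj_re, Complex.conj_im]; ring

lemma norm_sq_vvec (N : ℕ) (a : EuclideanSpace ℝ (Fin 2)) (u : EuclideanSpace ℝ (Fin 2 × Fin N)) :
    ‖vvec N a u‖ ^ 2 = ∑ k, ((vvec N a u k).re ^ 2 + (vvec N a u k).im ^ 2) := by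
  rw [EuclideanSpace.norm_eq, Real.sq_sqrt (by positivity)]
  exact Finset.sum_congr rfl fun k _ => by
    rw [Complex.sq_norm, Complex.normSq_apply]; ring

lemma norm_vvec (N : ℕ) (a : EuclideanSpace ℝ (Fin 2)) (u : EuclideanSpace ℝ (Fin 2 × Fin N)) :
    ‖vvec N a u‖ = ‖a‖ * ‖u‖ := by
  rw [EuclideanSpace.norm_eq, EuclideanSpace.norm_eq (𝕜 := ℝ) a,
    EuclideanSpace.norm_eq (𝕜 := ℝ) u,
    ← Real.sqrt_mul (by positivity)]
  congr 1
  simp only [Fintype.sum_prod_type, Fin.sum_univ_two, Real.norm_eq_abs, sq_abs, vvec, PiLp.toLp_apply,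
    Complex.sq_norm, Complex.normSq_apply, Finset.mul_sum,
    ← Finset.sum_add_distrib]
  exact Finset.sum_congr rfl fun k _ => by ring

lemma frob_eq (N : ℕ) (e : EuclideanSpace ℂ (Fin N)) :
    Real.sqrt (∑ i, ∑ j, (Treal N e i j) ^ 2) = Real.sqrt 2 * ‖e‖ := by
  have h : (∑ i, ∑ j, (Treal N e i j) ^ 2) = 2 * ‖e‖ ^ 2 := by
    rw [EuclideanSpace.norm_eq, Real.sq_sqrt (by positivity)]
    simp only [Treal, Matrix.of_apply, Fin.sum_univ_two, Fintype.sum_prod_type,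
      Fin.isValue, one_ne_zero, if_false, reduceIte,
      Complex.sq_norm, Complex.normSq_apply, Finset.mul_sum, ← Finset.sum_add_distrib]
    exact Finset.sum_congr rfl fun k _ => by ring
  rw [h, Real.sqrt_mul (by norm_num), Real.sqrt_sq (norm_nonneg _)]

/-- The infimum of `(uᵀ ⊗ aᵀ) vec(E) = aᵀ E u` over all `E = T(e)` with
`‖E‖_F ≤ √2·ε` and `‖e‖₂ ≤ ε` equals `-ε·‖u‖·‖a‖`. -/
theorem stmt_2 (N : ℕ) (a : EuclideanSpace ℝ (Fin 2))
    (u : EuclideanSpace ℝ (Fin 2 × Fin N)) (ε : ℝ) (hε : 0 < ε) (hN : 0 < N) :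
    sInf {x : ℝ | ∃ e : EuclideanSpace ℂ (Fin N),
        Real.sqrt (∑ i, ∑ j, (Treal N e i j) ^ 2) ≤ Real.sqrt 2 * ε ∧
        ‖e‖ ≤ ε ∧
        x = (fun i => a i) ⬝ᵥ (Treal N e).mulVec (fun j => u j)} =
      -ε * ‖u‖ * ‖a‖ := by
  set v := vvec N a u with hv
  have hnv : ‖v‖ = ‖a‖ * ‖u‖ := norm_vvec N a u
  -- lower bound
  have lb : ∀ x ∈ {x : ℝ | ∃ e : EuclideanSpace ℂ (Fin N),
      Real.sqrt (∑ i, ∑ j, (Treal N e i j) ^ 2) ≤ Real.sqrt 2 * ε ∧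
      ‖e‖ ≤ ε ∧
      x = (fun i => a i) ⬝ᵥ (Treal N e).mulVec (fun j => u j)},
      -ε * ‖u‖ * ‖a‖ ≤ x := by
    rintro x ⟨e, -, he, rfl⟩
    rw [expr_eq, ← inner_re_eq]
    have h1 : |(inner ℂ e v : ℂ).re| ≤ ‖e‖ * ‖v‖ := by
      calc |(inner ℂ e v : ℂ).re| ≤ ‖(inner ℂ e v : ℂ)‖ := Complex.abs_re_le_norm _
        _ = ‖(inner ℂ e v : ℂ)‖ := rfl
        _ ≤ ‖e‖ * ‖v‖ := norm_inner_le_norm _ _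
    have h2 : ‖e‖ * ‖v‖ ≤ ε * (‖a‖ * ‖u‖) := by
      rw [← hnv]
      exact mul_le_mul_of_nonneg_right he (norm_nonneg _)
    nlinarith [neg_abs_le ((inner ℂ e v : ℂ).re)]
  -- membership
  have mem : -ε * ‖u‖ * ‖a‖ ∈ {x : ℝ | ∃ e : EuclideanSpace ℂ (Fin N),
      Real.sqrt (∑ i, ∑ j, (Treal N e i j) ^ 2) ≤ Real.sqrt 2 * ε ∧
      ‖e‖ ≤ ε ∧
      x = (fun i => a i) ⬝ᵥ (Treal N e).mulVec (fun j => u j)} := by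
    by_cases h0 : ‖v‖ = 0
    · refine ⟨0, ?_, by simpa using hε.le, ?_⟩
      · rw [frob_eq]; simp; positivity
      · rw [expr_eq]
        have : ‖a‖ * ‖u‖ = 0 := by rw [← hnv]; exact h0
        rcases mul_eq_zero.mp this with h | h <;> simp [← hv, h]
    · have hvpos : 0 < ‖v‖ := lt_of_le_of_ne (norm_nonneg _) (Ne.symm h0)
      refine ⟨(-(ε / ‖v‖)) • v, ?_, ?_, ?_⟩
      · rw [frob_eq]
        have : ‖(-(ε / ‖v‖)) • v‖ = ε := by
          rw [norm_smul, Real.norm_eq_abs, abs_neg, abs_of_pos (by positivity),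
            div_mul_cancel₀ _ h0]
        rw [this]
      · rw [norm_smul, Real.norm_eq_abs, abs_neg, abs_of_pos (by positivity),
          div_mul_cancel₀ _ h0]
      · rw [expr_eq]
        have key : ∑ k, ((((-(ε / ‖v‖)) • v) k).re * (v k).re +
            (((-(ε / ‖v‖)) • v) k).im * (v k).im)
            = (-(ε / ‖v‖)) * ∑ k, ((v k).re ^ 2 + (v k).im ^ 2) := by
          rw [Finset.mul_sum]
          exact Finset.sum_congr rfl fun k _ => by
            simp [PiLp.smul_apply, Complex.smul_re, Complex.smul_im]; ring
        rw [← hv, key, ← norm_sq_vvec, ← hv]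
        field_simp
        rw [hnv]; ring
  exact le_antisymm (csInf_le ⟨_, lb⟩ mem) (le_csInf ⟨_, mem⟩ lb)
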